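/- Let k ≥ 1, let μ_k be a locally translation invariant probability measure on {0,1}^{k+1}, let j > k, and let ν_j be any probability measure on {0,1}^{j+1} such that for every i with 0 ≤ i ≤ j−k, the marginal of ν_j on coordinates {i,...,i+k} equals μ_k. Then S(ν_j) ≤ S(μ_k) + (j−k)·[S(μ_k) − S(μ_{k-1})], where μ_{k-1} is the marginal of μ_k on its first k coordinates. -/

import Mathlib

/-- Local translation invariance for a measure on `{0,1}^{k+1}`. -/
def IsLTI (k : ℕ) (μ : (Fin (k + 1) → Bool) → ℝ) : Prop :=
  ∀ η : Fin k → Bool, (∑ σ : Bool, μ (Fin.snoc η σ)) = ∑ σ : Bool, μ (Fin.cons σ η)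

/-- Shannon entropy of a measure on a finite set (with `0 log 0 = 0`). -/
noncomputable def shannonEntropy {Q : Type*} [Fintype Q] (μ : Q → ℝ) : ℝ :=
  -∑ q, μ q * Real.log (μ q)

/-- The marginal of a measure on `{0,1}^{k+1}` on the first `k` coordinates. -/
noncomputable def marg (k : ℕ) (μ : (Fin (k + 1) → Bool) → ℝ) : (Fin k → Bool) → ℝ :=
  fun ζ => ∑ σ : Bool, μ (Fin.snoc ζ σ)


lemma gibbs_pt (x y : ℝ) (hx : 0 ≤ x) (hy0 : 0 ≤ y) (h : x = 0 ∨ 0 < y) :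
    x - y ≤ x * Real.log x - x * Real.log y := by
  rcases h with h | hy
  · subst h; simp; nlinarith []
  rcases eq_or_lt_of_le hx with h | hx
  · simp [← h]; linarith
  · have h1 : Real.log (y / x) ≤ y / x - 1 := Real.log_le_sub_one_of_pos (by positivity)
    rw [Real.log_div (by positivity) (by positivity)] at h1
    have := mul_le_mul_of_nonneg_left h1 hx.le
    rw [mul_sub, mul_sub, mul_div_cancel₀ _ (ne_of_gt hx), mul_one] at this
    linarith

lemma ssa {A B C : Type*} [Fintype A] [Fintype B] [Fintype C]
    (p : A × B × C → ℝ) (hp : ∀ x, 0 ≤ p x) :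
    shannonEntropy p + shannonEntropy (fun b => ∑ a, ∑ c, p (a, b, c))
      ≤ shannonEntropy (fun ab : A × B => ∑ c, p (ab.1, ab.2, c))
        + shannonEntropy (fun bc : B × C => ∑ a, p (a, bc.1, bc.2)) := by
  classical
  set pAB : A × B → ℝ := fun ab => ∑ c, p (ab.1, ab.2, c) with hpAB
  set pBC : B × C → ℝ := fun bc => ∑ a, p (a, bc.1, bc.2) with hpBC
  set pB : B → ℝ := fun b => ∑ a, ∑ c, p (a, b, c) with hpB
  have hpABnn : ∀ ab, 0 ≤ pAB ab := fun ab => Finset.sum_nonneg fun c _ => hp _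
  have hpBCnn : ∀ bc, 0 ≤ pBC bc := fun bc => Finset.sum_nonneg fun a _ => hp _
  have hpBnn : ∀ b, 0 ≤ pB b := fun b =>
    Finset.sum_nonneg fun a _ => Finset.sum_nonneg fun c _ => hp _
  set q : A × B × C → ℝ := fun x => if pB x.2.1 = 0 then 0 else pAB (x.1, x.2.1) * pBC x.2 / pB x.2.1 with hq
  have hqnn : ∀ x, 0 ≤ q x := by
    intro x; rw [hq]; dsimp only
    split
    · exact le_refl 0
    · exact div_nonneg (mul_nonneg (hpABnn _) (hpBCnn _)) (hpBnn _)
  have hkey : ∀ x, p x = 0 ∨ (0 < pAB (x.1, x.2.1) ∧ 0 < pBC x.2 ∧ 0 < pB x.2.1) := by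
    intro ⟨a, b, c⟩
    rcases eq_or_lt_of_le (hp (a,b,c)) with h | h
    · exact Or.inl h.symm
    · right
      have h1 : 0 < pAB (a, b) := by
        apply lt_of_lt_of_le h
        exact Finset.single_le_sum (f := fun c => p (a,b,c)) (fun c _ => hp _) (Finset.mem_univ c)
      have h2 : 0 < pBC (b, c) := by
        apply lt_of_lt_of_le h
        exact Finset.single_le_sum (f := fun a => p (a,b,c)) (fun a _ => hp _) (Finset.mem_univ a)
      have h3 : 0 < pB b := by
        apply lt_of_lt_of_le h1
        exact Finset.single_le_sum (f := fun a => pAB (a, b)) (fun a _ => hpABnn _) (Finset.mem_univ a)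
      exact ⟨h1, h2, h3⟩
  have hkeyq : ∀ x, p x = 0 ∨ 0 < q x := by
    intro x
    rcases hkey x with h | ⟨h1, h2, h3⟩
    · exact Or.inl h
    · right; rw [hq]; dsimp only; rw [if_neg (ne_of_gt h3)]; positivity
  -- marginal sums
  have hsumA : ∀ b, (∑ a, pAB (a, b)) = pB b := by intro b; simp [hpAB, hpB]
  have hsumC : ∀ b, (∑ c, pBC (b, c)) = pB b := by
    intro b
    show (∑ c, ∑ a, p (a, b, c)) = ∑ a, ∑ c, p (a, b, c)
    exact Finset.sum_comm
  have hqb : ∀ b, (∑ a, ∑ c, q (a, b, c)) = if pB b = 0 then 0 else pB b := by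
    intro b
    by_cases hb : pB b = 0
    · simp [hq, hb]
    · rw [if_neg hb]
      have h2 : ∀ a, (∑ c, q (a, b, c)) = pAB (a, b) := by
        intro a
        have : ∀ c, q (a, b, c) = pAB (a, b) * pBC (b, c) / pB b := by
          intro c; rw [hq]; dsimp only; rw [if_neg hb]
        simp only [this]
        rw [← Finset.sum_div, ← Finset.mul_sum, hsumC, mul_div_assoc, div_self hb, mul_one]
      simp only [h2]
      exact hsumA b
  have hptot : (∑ x, p x) = ∑ b, pB b := by
    simp only [Fintype.sum_prod_type]
    rw [Finset.sum_comm]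
  have hqtot : (∑ x, q x) = ∑ b, if pB b = 0 then 0 else pB b := by
    simp only [Fintype.sum_prod_type]
    rw [Finset.sum_comm]
    exact Finset.sum_congr rfl fun b _ => hqb b
  have hsumq : ∑ x, q x ≤ ∑ x, p x := by
    rw [hptot, hqtot]
    apply Finset.sum_le_sum
    intro b _
    split
    · exact hpBnn b
    · exact le_refl _
  -- Gibbs inequality part
  have hgibbs : (∑ x, p x) - (∑ x, q x) ≤ (∑ x, p x * Real.log (p x)) - ∑ x, p x * Real.log (q x) := by
    rw [← Finset.sum_sub_distrib, ← Finset.sum_sub_distrib]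
    apply Finset.sum_le_sum
    intro x _
    exact gibbs_pt _ _ (hp x) (hqnn x) (hkeyq x)
  have hlogq : ∀ x, p x * Real.log (q x)
      = p x * Real.log (pAB (x.1, x.2.1)) + p x * Real.log (pBC x.2) - p x * Real.log (pB x.2.1) := by
    intro x
    rcases hkey x with h | ⟨h1, h2, h3⟩
    · rw [h]; ring
    · have hqx : q x = pAB (x.1, x.2.1) * pBC x.2 / pB x.2.1 := by
        rw [hq]; dsimp only; rw [if_neg (ne_of_gt h3)]
      rw [hqx, Real.log_div (by positivity) (ne_of_gt h3),
        Real.log_mul (ne_of_gt h1) (ne_of_gt h2)]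
      ring
  have hSAB : (∑ x : A × B × C, p x * Real.log (pAB (x.1, x.2.1)))
      = ∑ ab : A × B, pAB ab * Real.log (pAB ab) := by
    simp only [Fintype.sum_prod_type]
    apply Finset.sum_congr rfl; intro a _
    apply Finset.sum_congr rfl; intro b _
    rw [← Finset.sum_mul]
  have hSBC : (∑ x : A × B × C, p x * Real.log (pBC x.2))
      = ∑ bc : B × C, pBC bc * Real.log (pBC bc) := by
    rw [Fintype.sum_prod_type, Finset.sum_comm]
    apply Finset.sum_congr rfl; intro y _
    dsimp only
    rw [← Finset.sum_mul]
  have hSB : (∑ x : A × B × C, p x * Real.log (pB x.2.1))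
      = ∑ b : B, pB b * Real.log (pB b) := by
    simp only [Fintype.sum_prod_type]
    rw [Finset.sum_comm]
    apply Finset.sum_congr rfl; intro b _
    simp only [← Finset.sum_mul]
    rfl
  have hsplit : (∑ x, p x * Real.log (q x))
      = (∑ ab : A × B, pAB ab * Real.log (pAB ab)) + (∑ bc : B × C, pBC bc * Real.log (pBC bc))
        - ∑ b : B, pB b * Real.log (pB b) := by
    rw [← hSAB, ← hSBC, ← hSB, ← Finset.sum_add_distrib, ← Finset.sum_sub_distrib]
    exact Finset.sum_congr rfl fun x _ => hlogq x
  simp only [shannonEntropy]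
  have := hsumq
  linarith [hgibbs, hsplit.symm.le, hsplit.le]

lemma shannon_comp_equiv {Q Q' : Type*} [Fintype Q] [Fintype Q'] (e : Q' ≃ Q) (p : Q → ℝ) :
    shannonEntropy (fun x => p (e x)) = shannonEntropy p := by
  unfold shannonEntropy
  rw [Fintype.sum_equiv e (fun x => p (e x) * Real.log (p (e x)))
    (fun q => p q * Real.log (p q)) (fun x => rfl)]

def snocE (n : ℕ) {α : Type*} : ((Fin n → α) × α) ≃ (Fin (n + 1) → α) where
  toFun x := Fin.snoc x.1 x.2
  invFun η := (fun i => η i.castSucc, η (Fin.last n))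
  left_inv x := by
    ext u
    · simp
    · simp
  right_inv η := by
    funext u
    refine Fin.lastCases ?_ ?_ u
    · simp
    · intro i; simp

def splitE (k r : ℕ) : (Fin (k + r + 2) → Bool) ≃ (Fin (r + 1) → Bool) × (Fin k → Bool) × Bool where
  toFun η := (fun u => η ⟨u.1, by omega⟩, fun t => η ⟨r + 1 + t.1, by omega⟩, η ⟨k + r + 1, by omega⟩)
  invFun x := fun u =>
    if h : u.1 < r + 1 then x.1 ⟨u.1, h⟩
    else if h2 : u.1 < k + r + 1 then x.2.1 ⟨u.1 - (r + 1), by omega⟩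
    else x.2.2
  left_inv η := by
    funext u
    dsimp only
    rcases lt_or_ge u.1 (r + 1) with h | h
    · rw [dif_pos h]
    · rw [dif_neg (by omega)]
      rcases lt_or_ge u.1 (k + r + 1) with h2 | h2
      · rw [dif_pos h2]
        exact congrArg η (Fin.ext (by simp <;> omega))
      · rw [dif_neg (by omega)]
        exact congrArg η (Fin.ext (by simp <;> omega))
  right_inv x := by
    refine Prod.ext ?_ (Prod.ext ?_ ?_)
    · funext u
      dsimp only
      rw [dif_pos u.2]
    · funext t
      dsimp only
      rw [dif_neg (by omega), dif_pos (by omega)]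
      exact congrArg x.2.1 (Fin.ext (by simp <;> omega))
    · dsimp only
      rw [dif_neg (by omega), dif_neg (by omega)]

def splitE2 (k r : ℕ) : (Fin (k + r + 1) → Bool) ≃ (Fin (r + 1) → Bool) × (Fin k → Bool) where
  toFun η := (fun u => η ⟨u.1, by omega⟩, fun t => η ⟨r + 1 + t.1, by omega⟩)
  invFun x := fun u =>
    if h : u.1 < r + 1 then x.1 ⟨u.1, h⟩
    else x.2 ⟨u.1 - (r + 1), by omega⟩
  left_inv η := by
    funext u
    dsimp only
    rcases lt_or_ge u.1 (r + 1) with h | h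
    · rw [dif_pos h]
    · rw [dif_neg (by omega)]
      exact congrArg η (Fin.ext (by simp <;> omega))
  right_inv x := by
    refine Prod.ext ?_ ?_
    · funext u
      dsimp only
      rw [dif_pos u.2]
    · funext t
      dsimp only
      rw [dif_neg (by omega)]
      exact congrArg x.2 (Fin.ext (by simp <;> omega))

lemma splitE_symm_snoc (k r : ℕ) (a : Fin (r + 1) → Bool) (b : Fin k → Bool) (c : Bool) :
    (splitE k r).symm (a, b, c) = Fin.snoc ((splitE2 k r).symm (a, b)) c := by
  funext u
  refine Fin.lastCases ?_ ?_ u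
  · show (splitE k r).symm (a, b, c) (Fin.last (k + r + 1)) = _
    rw [Fin.snoc_last]
    show (if h : (Fin.last (k+r+1)).1 < r + 1 then _ else if h2 : (Fin.last (k+r+1)).1 < k + r + 1 then _ else c) = c
    rw [dif_neg (by simp [Fin.last] <;> omega), dif_neg (by simp [Fin.last])]
  · intro i
    rw [Fin.snoc_castSucc]
    show (if h : (i.castSucc).1 < r + 1 then a ⟨(i.castSucc).1, h⟩
      else if h2 : (i.castSucc).1 < k + r + 1 then b ⟨(i.castSucc).1 - (r+1), by omega⟩ else c)
      = (if h : i.1 < r + 1 then a ⟨i.1, h⟩ else b ⟨i.1 - (r+1), by omega⟩)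
    have hv : (i.castSucc).1 = i.1 := rfl
    rcases lt_or_ge i.1 (r + 1) with h | h
    · rw [dif_pos (by omega), dif_pos h]
      rfl
    · rw [dif_neg (by omega), dif_pos (by omega), dif_neg (by omega)]
      rfl

set_option maxHeartbeats 2000000 in
lemma key (k : ℕ) (μ : (Fin (k + 1) → Bool) → ℝ) :
    ∀ r : ℕ, ∀ p : (Fin (k + r + 1) → Bool) → ℝ, (∀ η, 0 ≤ p η) →
    (∀ i : ℕ, ∀ hi : i + k ≤ k + r, ∀ ζ : Fin (k + 1) → Bool,
      (∑ η : Fin (k + r + 1) → Bool,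
        if (∀ t : Fin (k + 1), η ⟨i + t, by have := t.isLt; omega⟩ = ζ t) then p η else 0) = μ ζ) →
    shannonEntropy p ≤ shannonEntropy μ + r * (shannonEntropy μ - shannonEntropy (marg k μ)) := by
  intro r
  induction r with
  | zero =>
    intro p hp h
    have hpμ : p = μ := by
      funext ζ
      rw [← h 0 (by omega) ζ]
      rw [Finset.sum_eq_single ζ]
      · rw [if_pos]
        intro t
        exact congrArg ζ (Fin.ext (by simp))
      · intro η _ hne
        rw [if_neg]
        intro hcon
        apply hne
        funext u
        have h2 := hcon u
        rwa [show (⟨0 + (u : ℕ), by have := u.isLt; omega⟩ : Fin (k + 0 + 1)) = u from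
          Fin.ext (by simp)] at h2
      · intro hζ; exact absurd (Finset.mem_univ ζ) hζ
    rw [hpμ]; simp
  | succ r ih =>
    intro p hp h
    -- the marginal on the first k+r+1 coordinates
    have hp'nn : ∀ η, 0 ≤ marg (k + r + 1) p η := fun η => Finset.sum_nonneg fun σ _ => hp _
    have h' : ∀ i : ℕ, ∀ hi : i + k ≤ k + r, ∀ ζ : Fin (k + 1) → Bool,
        (∑ η : Fin (k + r + 1) → Bool,
          if (∀ t : Fin (k + 1), η ⟨i + t, by have := t.isLt; omega⟩ = ζ t)
            then marg (k + r + 1) p η else 0) = μ ζ := by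
      intro i hi ζ
      have step1 : ∀ η' : Fin (k + r + 1) → Bool,
          (if (∀ t : Fin (k + 1), η' ⟨i + t, by have := t.isLt; omega⟩ = ζ t)
            then marg (k + r + 1) p η' else 0)
          = ∑ σ : Bool, (if (∀ t : Fin (k + 1), η' ⟨i + t, by have := t.isLt; omega⟩ = ζ t)
              then p (Fin.snoc η' σ) else 0) := by
        intro η'
        by_cases hcon : (∀ t : Fin (k + 1), η' ⟨i + t, by have := t.isLt; omega⟩ = ζ t)
        · rw [if_pos hcon]
          simp only [if_pos hcon]
          rfl
        · rw [if_neg hcon]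
          simp only [if_neg hcon]
          simp
      calc (∑ η' : Fin (k + r + 1) → Bool,
            if (∀ t : Fin (k + 1), η' ⟨i + t, by have := t.isLt; omega⟩ = ζ t)
              then marg (k + r + 1) p η' else 0)
          = ∑ η' : Fin (k + r + 1) → Bool, ∑ σ : Bool,
              (if (∀ t : Fin (k + 1), η' ⟨i + t, by have := t.isLt; omega⟩ = ζ t)
                then p (Fin.snoc η' σ) else 0) := Finset.sum_congr rfl fun η' _ => step1 η'
        _ = ∑ x : (Fin (k + r + 1) → Bool) × Bool,
              (if (∀ t : Fin (k + 1), x.1 ⟨i + t, by have := t.isLt; omega⟩ = ζ t)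
                then p (Fin.snoc x.1 x.2) else 0) :=
            (Fintype.sum_prod_type (fun x : (Fin (k + r + 1) → Bool) × Bool =>
              if (∀ t : Fin (k + 1), x.1 ⟨i + (t : ℕ), by have := t.isLt; omega⟩ = ζ t)
                then p (Fin.snoc x.1 x.2) else 0)).symm
        _ = ∑ η : Fin (k + (r + 1) + 1) → Bool,
              (if (∀ t : Fin (k + 1), η ⟨i + t, by have := t.isLt; omega⟩ = ζ t)
                then p η else 0) := by
            refine Fintype.sum_equiv (snocE (k + r + 1)) _ _ ?_
            intro x
            dsimp only [snocE, Equiv.coe_fn_mk]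
            refine if_congr ?_ rfl rfl
            refine forall_congr' fun t => ?_
            rw [show (⟨i + (t : ℕ), by have := t.isLt; omega⟩ : Fin (k + (r + 1) + 1))
                = Fin.castSucc ⟨i + (t : ℕ), by have := t.isLt; omega⟩ from Fin.ext rfl,
              Fin.snoc_castSucc]
        _ = μ ζ := h i (by omega) ζ
    -- evaluation of the split equivalence on the last window
    have heval : ∀ (a : Fin (r + 1) → Bool) (b : Fin k → Bool) (c' : Bool) (t : Fin (k + 1))
        (pf : r + 1 + (t : ℕ) < k + r + 2),
        (splitE k r).symm (a, b, c') ⟨r + 1 + (t : ℕ), pf⟩ = (Fin.snoc b c' : Fin (k + 1) → Bool) t := by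
      intro a b c' t pf
      rw [splitE_symm_snoc]
      rcases lt_or_ge (t : ℕ) k with ht | ht
      · rw [show (⟨r + 1 + (t : ℕ), pf⟩ : Fin (k + r + 2))
            = Fin.castSucc ⟨r + 1 + (t : ℕ), by omega⟩ from Fin.ext rfl, Fin.snoc_castSucc]
        rw [congrArg (Fin.snoc b c' : Fin (k + 1) → Bool)
          (show t = Fin.castSucc ⟨(t : ℕ), ht⟩ from Fin.ext rfl), Fin.snoc_castSucc]
        show (if h : r + 1 + (t : ℕ) < r + 1 then a ⟨r + 1 + (t : ℕ), h⟩
          else b ⟨r + 1 + (t : ℕ) - (r + 1), by omega⟩) = b ⟨(t : ℕ), ht⟩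
        rw [dif_neg (by omega)]
        exact congrArg b (Fin.ext (by simp))
      · have htk : (t : ℕ) = k := by have := t.isLt; omega
        rw [show (⟨r + 1 + (t : ℕ), pf⟩ : Fin (k + r + 2)) = Fin.last (k + r + 1) from
          Fin.ext (by simp [Fin.last]; omega), Fin.snoc_last]
        rw [congrArg (Fin.snoc b c' : Fin (k + 1) → Bool)
          (show t = Fin.last k from Fin.ext (by simp [Fin.last] <;> omega)), Fin.snoc_last]
    -- window marginal at position r+1 equals μ
    have e3 : ∀ (b : Fin k → Bool) (c' : Bool),
        (∑ a : Fin (r + 1) → Bool, p ((splitE k r).symm (a, b, c'))) = μ (Fin.snoc b c') := by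
      intro b c'
      have hcond : ∀ x : (Fin (r + 1) → Bool) × (Fin k → Bool) × Bool,
          ((∀ t : Fin (k + 1), (splitE k r).symm x ⟨r + 1 + (t : ℕ), by have := t.isLt; omega⟩
              = (Fin.snoc b c' : Fin (k+1) → Bool) t)
            ↔ (x.2.1 = b ∧ x.2.2 = c')) := by
        rintro ⟨a, b', cc⟩
        constructor
        · intro H
          have hbc : Fin.snoc b' cc = (Fin.snoc b c' : Fin (k+1) → Bool) := by
            funext t
            rw [← heval a b' cc t (by have := t.isLt; omega)]
            exact H t
          have h5 : ((b', cc) : (Fin k → Bool) × Bool) = (b, c') := (snocE k).injective hbc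
          exact ⟨congrArg Prod.fst h5, congrArg Prod.snd h5⟩
        · rintro ⟨h1, h2⟩ t
          dsimp only at h1 h2
          subst h1; subst h2
          exact heval a b' cc t (by have := t.isLt; omega)
      have step : ∀ a : Fin (r + 1) → Bool,
          (∑ y : (Fin k → Bool) × Bool,
            if (y.1 = b ∧ y.2 = c') then p ((splitE k r).symm (a, y.1, y.2)) else 0)
          = p ((splitE k r).symm (a, b, c')) := by
        intro a
        rw [Finset.sum_eq_single ((b, c') : (Fin k → Bool) × Bool)]
        · rw [if_pos ⟨rfl, rfl⟩]
        · rintro y _ hne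
          rw [if_neg]
          rintro ⟨h1, h2⟩
          exact hne (Prod.ext h1 h2)
        · intro hy; exact absurd (Finset.mem_univ _) hy
      calc (∑ a : Fin (r + 1) → Bool, p ((splitE k r).symm (a, b, c')))
          = ∑ a : Fin (r + 1) → Bool, ∑ y : (Fin k → Bool) × Bool,
              (if (y.1 = b ∧ y.2 = c') then p ((splitE k r).symm (a, y.1, y.2)) else 0) :=
            Finset.sum_congr rfl fun a _ => (step a).symm
        _ = ∑ x : (Fin (r + 1) → Bool) × (Fin k → Bool) × Bool,
              (if (x.2.1 = b ∧ x.2.2 = c') then p ((splitE k r).symm x) else 0) :=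
            (Fintype.sum_prod_type (fun x : (Fin (r + 1) → Bool) × (Fin k → Bool) × Bool =>
              if (x.2.1 = b ∧ x.2.2 = c') then p ((splitE k r).symm x) else 0)).symm
        _ = ∑ x : (Fin (r + 1) → Bool) × (Fin k → Bool) × Bool,
              (if (∀ t : Fin (k + 1),
                  (splitE k r).symm x ⟨r + 1 + (t : ℕ), by have := t.isLt; omega⟩
                    = (Fin.snoc b c' : Fin (k+1) → Bool) t)
                then p ((splitE k r).symm x) else 0) :=
            Finset.sum_congr rfl fun x _ => (if_congr (hcond x) rfl rfl).symm
        _ = ∑ η : Fin (k + (r + 1) + 1) → Bool,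
              (if (∀ t : Fin (k + 1),
                  η ⟨r + 1 + (t : ℕ), by have := t.isLt; omega⟩
                    = (Fin.snoc b c' : Fin (k+1) → Bool) t)
                then p η else 0) :=
            Equiv.sum_comp (splitE k r).symm
              (fun η : Fin (k + r + 2) → Bool =>
                if (∀ t : Fin (k + 1),
                    η ⟨r + 1 + (t : ℕ), by have := t.isLt; omega⟩
                      = (Fin.snoc b c' : Fin (k + 1) → Bool) t)
                  then p η else 0)
        _ = μ (Fin.snoc b c') := h (r + 1) (by omega) (Fin.snoc b c')
    -- apply strong subadditivity
    set q : (Fin (r + 1) → Bool) × (Fin k → Bool) × Bool → ℝ :=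
      fun x => p ((splitE k r).symm x) with hqdef
    have H := ssa q (fun x => hp _)
    have e1 : shannonEntropy q = shannonEntropy p := shannon_comp_equiv (splitE k r).symm p
    have e2 : shannonEntropy (fun ab : (Fin (r + 1) → Bool) × (Fin k → Bool) =>
        ∑ c', q (ab.1, ab.2, c')) = shannonEntropy (marg (k + r + 1) p) := by
      have e2a : (fun ab : (Fin (r + 1) → Bool) × (Fin k → Bool) => ∑ c', q (ab.1, ab.2, c'))
          = fun ab => marg (k + r + 1) p ((splitE2 k r).symm ab) := by
        funext ab
        show _ = ∑ σ : Bool, p (Fin.snoc ((splitE2 k r).symm ab) σ)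
        apply Finset.sum_congr rfl
        intro c' _
        show p ((splitE k r).symm (ab.1, ab.2, c')) = p (Fin.snoc ((splitE2 k r).symm ab) c')
        rw [splitE_symm_snoc]
      rw [e2a]
      exact shannon_comp_equiv (splitE2 k r).symm (marg (k + r + 1) p)
    have e3' : shannonEntropy (fun bc : (Fin k → Bool) × Bool => ∑ a, q (a, bc.1, bc.2))
        = shannonEntropy μ := by
      have e3a : (fun bc : (Fin k → Bool) × Bool => ∑ a, q (a, bc.1, bc.2))
          = fun bc => μ ((snocE k) bc) := by
        funext bc
        exact e3 bc.1 bc.2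
      rw [e3a]
      exact shannon_comp_equiv (snocE k) μ
    have e4 : shannonEntropy (fun b : Fin k → Bool => ∑ a, ∑ c', q (a, b, c'))
        = shannonEntropy (marg k μ) := by
      have e4a : (fun b : Fin k → Bool => ∑ a, ∑ c', q (a, b, c')) = marg k μ := by
        funext b
        rw [Finset.sum_comm]
        show (∑ c' : Bool, ∑ a, q (a, b, c')) = ∑ σ : Bool, μ (Fin.snoc b σ)
        exact Finset.sum_congr rfl fun c' _ => e3 b c'
      rw [e4a]
    rw [e1, e2, e3', e4] at H
    have hih := ih (marg (k + r + 1) p) hp'nn h'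
    push_cast
    push_cast at hih
    linarith

theorem stmt7 (k j : ℕ) (hk : 1 ≤ k) (hj : k < j) (μ : (Fin (k + 1) → Bool) → ℝ)
    (hpos : ∀ η, 0 ≤ μ η) (hsum : (∑ η, μ η) = 1) (hLTI : IsLTI k μ)
    (ν : (Fin (j + 1) → Bool) → ℝ) (hνpos : ∀ η, 0 ≤ ν η) (hνsum : (∑ η, ν η) = 1)
    (hmarg : ∀ i : ℕ, ∀ hi : i + k ≤ j, ∀ ζ : Fin (k + 1) → Bool,
      (∑ η : Fin (j + 1) → Bool,
        if (∀ t : Fin (k + 1), η ⟨i + t, by have := t.isLt; omega⟩ = ζ t) then ν η else 0)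
        = μ ζ) :
    shannonEntropy ν
      ≤ shannonEntropy μ + ((j - k : ℕ) : ℝ) * (shannonEntropy μ - shannonEntropy (marg k μ)) := by
  obtain ⟨r, rfl⟩ : ∃ r, j = k + r := ⟨j - k, by omega⟩
  rw [show (k + r - k : ℕ) = r by omega]
  exact key k μ r ν hνpos hmarg
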